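/- If j₁ = j₃ = 0 and j₂ ≠ 0, or if j₂ = j₃ = 0 and j₁ ≠ 0, then the system b₁(b₂² − b₃²) = j₁, b₂(b₁² − b₃²) = j₂, b₃(b₁² + b₂²) = j₃ has no real solutions. -/
import Mathlib

/-- If `j₁ = j₃ = 0` and `j₂ ≠ 0`, or `j₂ = j₃ = 0` and `j₁ ≠ 0`, then the system
`b₁(b₂² − b₃²) = j₁`, `b₂(b₁² − b₃²) = j₂`, `b₃(b₁² + b₂²) = j₃` has no real solutions. -/
theorem hyperbolic_cubic_no_solutions (j₁ j₂ j₃ : ℝ)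
    (h : (j₁ = 0 ∧ j₃ = 0 ∧ j₂ ≠ 0) ∨ (j₂ = 0 ∧ j₃ = 0 ∧ j₁ ≠ 0)) :
    ¬ ∃ b₁ b₂ b₃ : ℝ,
        b₁ * (b₂ ^ 2 - b₃ ^ 2) = j₁ ∧
        b₂ * (b₁ ^ 2 - b₃ ^ 2) = j₂ ∧
        b₃ * (b₁ ^ 2 + b₂ ^ 2) = j₃ := by
  rintro ⟨b₁, b₂, b₃, e1, e2, e3⟩
  have key : b₃ = 0 ∨ (b₁ = 0 ∧ b₂ = 0) := by
    rcases h with ⟨_, h3, _⟩ | ⟨_, h3, _⟩ <;> rw [h3] at e3 <;>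
    · rcases mul_eq_zero.mp e3 with h | h
      · exact Or.inl h
      · refine Or.inr ⟨by nlinarith [sq_nonneg b₁, sq_nonneg b₂], by nlinarith [sq_nonneg b₁, sq_nonneg b₂]⟩
  rcases h with ⟨h1, h3, h2⟩ | ⟨h2, h3, h1⟩
  · rcases key with hb3 | ⟨hb1, hb2⟩
    · subst hb3; rw [h1] at e1
      apply h2; rw [← e2]
      rcases (by simpa using e1 : b₁ = 0 ∨ b₂ = 0) with h | h <;> simp [h]
    · apply h2; rw [← e2, hb2]; ring
  · rcases key with hb3 | ⟨hb1, hb2⟩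
    · subst hb3; rw [h2] at e2
      apply h1; rw [← e1]
      rcases (by simpa using e2 : b₂ = 0 ∨ b₁ = 0) with h | h <;> simp [h]
    · apply h1; rw [← e1, hb1]; ring
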